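/- If I = a + Σ_{i=1}^n a_i∂^{-1}b_i ∈ F⟨∂^{-1}⟩, then L(I) ≤ n; moreover I admits a presentation of the same form with exactly L(I) summands a_i∂^{-1}b_i. -/

import Mathlib

open Finset

/-- A derivation on a field `F`. -/
structure IsDerivation {F : Type*} [Field F] (d : F → F) : Prop where
  map_add : ∀ a b : F, d (a + b) = d a + d b
  leibniz : ∀ a b : F, d (a * b) = d a * b + a * d b

namespace IsDerivation

variable {F : Type*} [Field F] {d : F → F}

theorem map_zero' (hd : IsDerivation d) : d 0 = 0 := by
  have h := hd.map_add 0 0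
  simp only [add_zero] at h
  exact (left_eq_add.mp h)

theorem map_one' (hd : IsDerivation d) : d 1 = 0 := by
  have h := hd.leibniz 1 1
  simp only [mul_one, one_mul] at h
  exact (left_eq_add.mp h)

theorem map_neg' (hd : IsDerivation d) (a : F) : d (-a) = - d a := by
  have h := hd.map_add a (-a)
  simp only [add_neg_cancel, hd.map_zero'] at h
  exact (neg_eq_of_add_eq_zero_right h.symm).symm

end IsDerivation

/-- The subfield of constants of a derivation. -/
def constants (F : Type*) [Field F] (d : F → F) (hd : IsDerivation d) : Subfield F where
  carrier := {a : F | d a = 0}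
  zero_mem' := hd.map_zero'
  one_mem' := hd.map_one'
  add_mem' := by
    intro a b ha hb
    simp only [Set.mem_setOf_eq] at *
    rw [hd.map_add, ha, hb, add_zero]
  neg_mem' := by
    intro a ha
    simp only [Set.mem_setOf_eq] at *
    rw [hd.map_neg', ha, neg_zero]
  mul_mem' := by
    intro a b ha hb
    simp only [Set.mem_setOf_eq] at *
    rw [hd.leibniz, ha, hb, zero_mul, mul_zero, add_zero]
  inv_mem' := by
    intro a ha
    simp only [Set.mem_setOf_eq] at *
    by_cases h0 : a = 0
    · rw [h0, inv_zero]; exact hd.map_zero'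
    · have h := hd.leibniz a a⁻¹
      rw [mul_inv_cancel₀ h0, hd.map_one', ha, zero_mul, zero_add] at h
      have h2 : a * d a⁻¹ = 0 := h.symm
      rcases mul_eq_zero.mp h2 with h3 | h3
      · exact absurd h3 h0
      · exact h3
/-- `A` is the ring of differential operators `F⟨∂⟩` over the differential field `(F, d)`:
it contains `F` via `ι`, an element `δ` (the symbol `∂`) satisfying `∂a = a∂ + a'`, and every
element has a unique expression `Σ ι(aᵢ) ∂^i`. -/
structure IsDiffOpRing {F : Type*} [Field F] (d : F → F) (A : Type*) [Ring A]
    (ι : F →+* A) (δ : A) : Prop where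
  comm : ∀ a : F, δ * ι a = ι a * δ + ι (d a)
  repr : ∀ P : A, ∃! c : ℕ →₀ F, P = c.sum fun i x => ι x * δ ^ i

/-- The action of the differential operator with coefficients `a 0, …, a n`
(i.e. `Σ_{i ≤ n} aᵢ ∂^i`) on an element `y` of `F`. -/
def diffOpAct {F : Type*} [Field F] (d : F → F) (n : ℕ) (a : ℕ → F) (y : F) : F :=
  ∑ i ∈ Finset.range (n + 1), a i * d^[i] y

/-- A differential field is linearly differentially closed if every differential operator of
positive degree has a nonzero zero. -/
def LinDiffClosed {F : Type*} [Field F] (d : F → F) : Prop :=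
  ∀ (n : ℕ) (a : ℕ → F), 0 < n → a n ≠ 0 → ∃ y : F, y ≠ 0 ∧ diffOpAct d n a y = 0

/-- `P ∈ F⟨∂⟩` has degree `n`, i.e. `P = Σ_{i ≤ n} ι(aᵢ) δ^i` with `aₙ ≠ 0`. -/
def HasDeg {F : Type*} [Field F] {A : Type*} [Ring A] (ι : F →+* A) (δ : A)
    (P : A) (n : ℕ) : Prop :=
  ∃ a : ℕ → F, a n ≠ 0 ∧ P = ∑ i ∈ Finset.range (n + 1), ι (a i) * δ ^ i

/-- `K` is the division ring of quotients of the (Ore) domain `A`: `A` embeds in `K` via `j`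
and every element of `K` has the form `P⁻¹ Q` with `P, Q ∈ A`, `P ≠ 0`. -/
structure IsQuotientDivisionRing (A : Type*) [Ring A] (K : Type*) [DivisionRing K]
    (j : A →+* K) : Prop where
  inj : Function.Injective j
  quot : ∀ f : K, ∃ P Q : A, P ≠ 0 ∧ f = (j P)⁻¹ * j Q

/-- `f = P⁻¹ Q` is a minimal presentation of `f ∈ F(∂)`: a presentation where `P` has the
smallest possible degree. -/
def IsMinPres {F : Type*} [Field F] {A : Type*} [Ring A] (ι : F →+* A) (δ : A)
    {K : Type*} [DivisionRing K] (j : A →+* K) (f : K) (P Q : A) : Prop :=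
  P ≠ 0 ∧ f = (j P)⁻¹ * j Q ∧
    ∀ (P' Q' : A) (n n' : ℕ), P' ≠ 0 → f = (j P')⁻¹ * j Q' →
      HasDeg ι δ P n → HasDeg ι δ P' n' → n ≤ n'

/-- `f ∈ F(∂)` has length `n`: the smallest degree of `P` over all presentations
`f = P⁻¹ Q` is `n`. -/
def HasLength {F : Type*} [Field F] {A : Type*} [Ring A] (ι : F →+* A) (δ : A)
    {K : Type*} [DivisionRing K] (j : A →+* K) (f : K) (n : ℕ) : Prop :=
  (∃ P Q : A, P ≠ 0 ∧ f = (j P)⁻¹ * j Q ∧ HasDeg ι δ P n) ∧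
  ∀ (P Q : A) (m : ℕ), P ≠ 0 → f = (j P)⁻¹ * j Q → HasDeg ι δ P m → n ≤ m

section
variable {F : Type*} [Field F] {d : F → F} {A : Type*} [Ring A] (ι : F →+* A) (δ : A)

/-- `∑_{i<N} ι(pᵢ) δ^i`. -/
def fsum (p : ℕ → F) (N : ℕ) : A := ∑ i ∈ range N, ι (p i) * δ ^ i

variable {ι δ}

lemma fsum_congr {p q : ℕ → F} {N : ℕ} (h : ∀ i < N, p i = q i) :
    fsum ι δ p N = fsum ι δ q N :=
  Finset.sum_congr rfl fun i hi => by rw [h i (mem_range.mp hi)]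

lemma fsum_pad {p : ℕ → F} {M N : ℕ} (h : M ≤ N) :
    fsum ι δ p M = fsum ι δ (fun i => if i < M then p i else 0) N := by
  unfold fsum
  rw [← Finset.sum_range_add_sum_Ico _ h]
  have h2 : ∑ i ∈ Finset.Ico M N, ι (if i < M then p i else 0) * δ ^ i = 0 :=
    Finset.sum_eq_zero fun i hi => by
      rw [if_neg (by have := (mem_Ico.mp hi).1; omega), map_zero, zero_mul]
  rw [h2, add_zero]
  refine Finset.sum_congr rfl fun i hi => ?_
  simp [mem_range.mp hi]

lemma fsum_add {p q : ℕ → F} {N : ℕ} :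
    fsum ι δ p N + fsum ι δ q N = fsum ι δ (fun i => p i + q i) N := by
  unfold fsum
  rw [← Finset.sum_add_distrib]
  exact Finset.sum_congr rfl fun i _ => by rw [map_add, add_mul]

lemma fsum_zero {N : ℕ} : fsum ι δ (fun _ => (0:F)) N = 0 :=
  Finset.sum_eq_zero fun i _ => by rw [map_zero, zero_mul]

lemma iota_mul_fsum {x : F} {p : ℕ → F} {N : ℕ} :
    ι x * fsum ι δ p N = fsum ι δ (fun i => x * p i) N := by
  unfold fsum
  rw [Finset.mul_sum]
  exact Finset.sum_congr rfl fun i _ => by rw [← mul_assoc, ← map_mul]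

lemma fsum_mul_delta {p : ℕ → F} {N : ℕ} :
    fsum ι δ p N * δ = fsum ι δ (fun i => if i = 0 then 0 else p (i-1)) (N+1) := by
  unfold fsum
  rw [Finset.sum_mul,
    Finset.sum_range_succ' (fun i => ι (if i = 0 then 0 else p (i-1)) * δ ^ i) N]
  have h0 : ι (if (0:ℕ) = 0 then (0:F) else p (0-1)) * δ ^ 0 = 0 := by
    rw [if_pos rfl, map_zero, zero_mul]
  rw [h0, add_zero]
  refine Finset.sum_congr rfl fun i _ => ?_
  rw [if_neg (Nat.succ_ne_zero i), Nat.add_sub_cancel, mul_assoc, pow_succ]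

lemma delta_mul_fsum (hA : IsDiffOpRing d A ι δ) {p : ℕ → F} {N : ℕ} :
    δ * fsum ι δ p N =
      fsum ι δ (fun i => (if i = 0 then 0 else p (i-1)) + (if i < N then d (p i) else 0)) (N+1) := by
  have h1 : δ * fsum ι δ p N = fsum ι δ p N * δ + fsum ι δ (fun i => d (p i)) N := by
    unfold fsum
    rw [Finset.mul_sum, Finset.sum_mul, ← Finset.sum_add_distrib]
    refine Finset.sum_congr rfl fun i _ => ?_
    rw [← mul_assoc, hA.comm, add_mul, mul_assoc, ← pow_succ', pow_succ, ← mul_assoc]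
  rw [h1, fsum_mul_delta, fsum_pad (p := fun i => d (p i)) (Nat.le_succ N), fsum_add]

lemma delta_pow_mul_iota (hA : IsDiffOpRing d A ι δ) (k : ℕ) (x : F) :
    ∃ q : ℕ → F, δ ^ k * ι x = fsum ι δ q (k+1) := by
  induction k with
  | zero =>
    refine ⟨fun _ => x, ?_⟩
    simp [fsum]
  | succ k ih =>
    obtain ⟨q, hq⟩ := ih
    refine ⟨fun i => (if i = 0 then 0 else q (i-1)) + (if i < k+1 then d (q i) else 0), ?_⟩
    rw [pow_succ', mul_assoc, hq, delta_mul_fsum hA]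

/-- Bridge between `fsum` and `Finsupp.sum` representations. -/
lemma fsum_eq_finsupp_sum {p : ℕ → F} {N : ℕ} :
    ∃ c : ℕ →₀ F, (fsum ι δ p N = c.sum fun i x => ι x * δ ^ i) ∧ ∀ i < N, c i = p i := by
  classical
  refine ⟨Finsupp.onFinset (range N) (fun i => if i < N then p i else 0)
    (fun i hi => by rw [mem_range]; by_contra h; exact hi (by simp [h])), ?_, ?_⟩
  · rw [Finsupp.sum_of_support_subset _ (Finsupp.support_onFinset_subset) _
      (fun i _ => by rw [map_zero, zero_mul])]
    rw [fsum_pad (le_refl N)]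
    unfold fsum
    refine Finset.sum_congr rfl fun i hi => ?_
    simp [Finsupp.onFinset]
  · intro i hi
    simp [Finsupp.onFinset, hi]

lemma fsum_inj (hA : IsDiffOpRing d A ι δ) {p q : ℕ → F} {N : ℕ}
    (h : fsum ι δ p N = fsum ι δ q N) : ∀ i < N, p i = q i := by
  obtain ⟨c1, hc1, hc1'⟩ := fsum_eq_finsupp_sum (p := p) (N := N) (ι := ι) (δ := δ)
  obtain ⟨c2, hc2, hc2'⟩ := fsum_eq_finsupp_sum (p := q) (N := N) (ι := ι) (δ := δ)
  obtain ⟨c, hc, hu⟩ := hA.repr (fsum ι δ p N)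
  have e1 : c1 = c := hu c1 hc1
  have e2 : c2 = c := hu c2 (h ▸ hc2)
  intro i hi
  rw [← hc1' i hi, ← hc2' i hi, e1, e2]

lemma exists_fsum (hA : IsDiffOpRing d A ι δ) (P : A) :
    ∃ (p : ℕ → F) (N : ℕ), 0 < N ∧ P = fsum ι δ p N := by
  obtain ⟨c, hc, -⟩ := hA.repr P
  classical
  set N := (c.support.sup id) + 1 with hN
  refine ⟨fun i => c i, N, Nat.succ_pos _, ?_⟩
  rw [hc, Finsupp.sum_of_support_subset _ (fun i hi => mem_range.mpr ?_) _
    (fun i _ => by rw [map_zero, zero_mul])]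
  · rfl
  · have := Finset.le_sup (f := id) hi
    simp only [id_eq] at this
    omega

lemma fsum_split {p : ℕ → F} {M : ℕ} :
    fsum ι δ p (M+1) = fsum ι δ (fun i => p (i+1)) M * δ + ι (p 0) := by
  rw [fsum_mul_delta]
  have h0 : ι (p 0) = fsum ι δ (fun i => if i = 0 then p 0 else 0) (M+1) := by
    unfold fsum
    rw [Finset.sum_range_succ' (fun i => ι (if i = 0 then p 0 else 0) * δ ^ i) M]
    simp
  rw [h0, fsum_add]
  exact (fsum_congr fun i hi => by rcases i with _|i <;> simp).symm

/-- Every `P` splits as `R * δ + ι c`. -/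
lemma exists_split (hA : IsDiffOpRing d A ι δ) (P : A) :
    ∃ (R : A) (c : F), P = R * δ + ι c := by
  obtain ⟨p, N, hN, hP⟩ := exists_fsum hA P
  obtain ⟨M, rfl⟩ := Nat.exists_eq_succ_of_ne_zero hN.ne'
  exact ⟨_, _, hP.trans fsum_split⟩

lemma mul_delta_eq_iota (hA : IsDiffOpRing d A ι δ) {T : A} {x : F}
    (h : T * δ = ι x) : x = 0 := by
  obtain ⟨t, N, hN, hT⟩ := exists_fsum hA T
  have h2 : fsum ι δ (fun i => if i = 0 then 0 else t (i-1)) (N+1)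
      = fsum ι δ (fun i => if i = 0 then x else 0) (N+1) := by
    rw [← fsum_mul_delta, ← hT, h]
    unfold fsum
    rw [Finset.sum_range_succ' (fun i => ι (if i = 0 then x else 0) * δ ^ i) N]
    have : ∑ i ∈ range N, ι (if i + 1 = 0 then x else 0) * δ ^ (i+1) = 0 :=
      Finset.sum_eq_zero fun i _ => by simp
    rw [this, zero_add, pow_zero, mul_one, if_pos rfl]
  have := fsum_inj hA h2 0 (Nat.succ_pos N)
  simpa using this.symm

/-- Uniqueness of the constant term in a split. -/
lemma split_unique (hA : IsDiffOpRing d A ι δ) {R R' : A} {c c' : F}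
    (h : R * δ + ι c = R' * δ + ι c') : c = c' := by
  have h2 : (R - R') * δ = ι (c' - c) := by
    rw [sub_mul, map_sub, sub_eq_sub_iff_add_eq_add]
    exact h.trans (add_comm _ _)
  have := mul_delta_eq_iota hA h2
  exact (sub_eq_zero.mp this).symm


/-- The constant term of `P` (w.r.t. the split `P = R δ + ι c`). -/
noncomputable def cc (hA : IsDiffOpRing d A ι δ) (P : A) : F :=
  (exists_split hA P).choose_spec.choose

lemma cc_spec (hA : IsDiffOpRing d A ι δ) (P : A) :
    ∃ R : A, P = R * δ + ι (cc hA P) :=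
  ⟨(exists_split hA P).choose, (exists_split hA P).choose_spec.choose_spec⟩

lemma cc_eq (hA : IsDiffOpRing d A ι δ) {P R : A} {c : F} (h : P = R * δ + ι c) :
    cc hA P = c := by
  obtain ⟨R', hR'⟩ := cc_spec hA P
  exact split_unique hA (hR'.symm.trans h)

lemma cc_iota (hA : IsDiffOpRing d A ι δ) (x : F) : cc hA (ι x) = x :=
  cc_eq hA (by rw [zero_mul, zero_add])

lemma cc_zero (hA : IsDiffOpRing d A ι δ) : cc hA 0 = 0 := by
  have := cc_iota hA 0
  rwa [map_zero] at this

/-- Action of a differential operator `P` on `y ∈ F`. -/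
noncomputable def act (hA : IsDiffOpRing d A ι δ) (P : A) (y : F) : F :=
  cc hA (P * ι y)

lemma act_eq (hA : IsDiffOpRing d A ι δ) {P R : A} {y c : F}
    (h : P * ι y = R * δ + ι c) : act hA P y = c := cc_eq hA h

lemma act_iota (hA : IsDiffOpRing d A ι δ) (x y : F) : act hA (ι x) y = x * y :=
  act_eq hA (by rw [← map_mul, zero_mul, zero_add])

lemma act_delta (hA : IsDiffOpRing d A ι δ) (y : F) : act hA δ y = d y :=
  act_eq hA (hA.comm y)

lemma act_zero (hA : IsDiffOpRing d A ι δ) (P : A) : act hA P 0 = 0 := by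
  unfold act
  rw [map_zero, mul_zero, cc_zero]

lemma act_mul (hA : IsDiffOpRing d A ι δ) (P Q : A) (y : F) :
    act hA (P * Q) y = act hA P (act hA Q y) := by
  obtain ⟨R, hR⟩ := cc_spec hA (Q * ι y)
  obtain ⟨S, hS⟩ := cc_spec hA (P * ι (cc hA (Q * ι y)))
  refine act_eq hA (R := P * R + S) ?_
  rw [mul_assoc, hR, mul_add, hS]
  have e1 : act hA Q y = cc hA (Q * ι y) := rfl
  have e2 : act hA P (act hA Q y) = cc hA (P * ι (cc hA (Q * ι y))) := by rw [e1]; rfl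
  rw [e2, add_mul, mul_assoc, add_assoc]

lemma act_delta_add_iota (hA : IsDiffOpRing d A ι δ) (c y : F) :
    act hA (δ + ι c) y = d y + c * y := by
  refine act_eq hA (R := ι y) ?_
  rw [add_mul, hA.comm, ← map_mul, map_add, add_assoc]

/-- `P` has degree `< N`. -/
def DegLT (ι : F →+* A) (δ : A) (P : A) (N : ℕ) : Prop := ∃ p : ℕ → F, P = fsum ι δ p N

lemma DegLT.mono {P : A} {M N : ℕ} (h : DegLT ι δ P M) (hMN : M ≤ N) : DegLT ι δ P N := by
  obtain ⟨p, hp⟩ := h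
  exact ⟨_, hp.trans (fsum_pad hMN)⟩

lemma DegLT.add {P Q : A} {N : ℕ} (hP : DegLT ι δ P N) (hQ : DegLT ι δ Q N) :
    DegLT ι δ (P + Q) N := by
  obtain ⟨p, hp⟩ := hP; obtain ⟨q, hq⟩ := hQ
  exact ⟨_, by rw [hp, hq, fsum_add]⟩

lemma DegLT.zero {N : ℕ} : DegLT ι δ (0 : A) N := ⟨_, fsum_zero.symm⟩

lemma DegLT.iota_mul {P : A} {N : ℕ} (h : DegLT ι δ P N) (x : F) :
    DegLT ι δ (ι x * P) N := by
  obtain ⟨p, hp⟩ := h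
  exact ⟨_, by rw [hp, iota_mul_fsum]⟩

lemma DegLT.sum {s : Finset ℕ} {g : ℕ → A} {N : ℕ} (h : ∀ k ∈ s, DegLT ι δ (g k) N) :
    DegLT ι δ (∑ k ∈ s, g k) N := by
  classical
  induction s using Finset.induction_on with
  | empty => simpa using DegLT.zero
  | insert _ _ hk ih =>
    rw [Finset.sum_insert hk]
    exact (h _ (Finset.mem_insert_self _ _)).add
      (ih fun k hks => h k (Finset.mem_insert_of_mem hks))

lemma DegLT.mul_iota (hA : IsDiffOpRing d A ι δ) {P : A} {N : ℕ}
    (h : DegLT ι δ P N) (x : F) : DegLT ι δ (P * ι x) N := by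
  obtain ⟨p, hp⟩ := h
  rw [hp]
  unfold fsum
  rw [Finset.sum_mul]
  refine DegLT.sum fun k hk => ?_
  rw [mul_assoc]
  obtain ⟨q, hq⟩ := delta_pow_mul_iota hA k x
  rw [hq]
  exact (DegLT.iota_mul ⟨q, rfl⟩ (p k)).mono (mem_range.mp hk)


lemma cc_fsum (hA : IsDiffOpRing d A ι δ) {p : ℕ → F} {M : ℕ} :
    cc hA (fsum ι δ p (M+1)) = p 0 :=
  cc_eq hA fsum_split

lemma iota_eq_fsum {x : F} {M : ℕ} :
    (ι x : A) = fsum ι δ (fun i => if i = 0 then x else 0) (M+1) := by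
  have h1 : (ι x : A) = fsum ι δ (fun _ => x) 1 := by simp [fsum]
  rw [h1, fsum_pad (Nat.succ_le_succ (Nat.zero_le M))]
  exact fsum_congr fun i hi => by rcases i with _|i <;> simp

lemma fsum_ne_zero (hA : IsDiffOpRing d A ι δ) {p : ℕ → F} {N k : ℕ}
    (hk : k < N) (hpk : p k ≠ 0) : fsum ι δ p N ≠ 0 := by
  intro h
  rw [show (0:A) = fsum ι δ (fun _ => 0) N from fsum_zero.symm] at h
  exact hpk (fsum_inj hA h k hk)

lemma delta_ne_zero (hA : IsDiffOpRing d A ι δ) : δ ≠ 0 := by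
  have h1 : δ = fsum ι δ (fun i => if i = 1 then 1 else 0) 2 := by
    unfold fsum
    rw [Finset.sum_range_succ, Finset.sum_range_succ, Finset.sum_range_zero]
    norm_num
  rw [h1]
  exact fsum_ne_zero hA (k := 1) (by omega) (by norm_num)

lemma delta_mul_eq_iota_left (hA : IsDiffOpRing d A ι δ) :
    ∀ (N : ℕ) (t : ℕ → F) (x : F), δ * fsum ι δ t N = ι x → x = 0 := by
  intro N
  induction N with
  | zero =>
    intro t x h
    rw [show fsum ι δ t 0 = 0 from rfl, mul_zero] at h
    have : (ι x : A) = ι 0 := by rw [map_zero]; exact h.symm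
    have h2 : fsum ι δ (fun i => if i = 0 then x else 0) 1
        = fsum ι δ (fun i => if i = 0 then (0:F) else 0) 1 := by
      rw [← iota_eq_fsum, ← iota_eq_fsum, this]
    simpa using fsum_inj hA h2 0 Nat.one_pos
  | succ N ih =>
    intro t x h
    have h0 := h
    rw [delta_mul_fsum hA, iota_eq_fsum (M := N+1)] at h
    have htop := fsum_inj hA h (N+1) (by omega)
    simp only [Nat.succ_ne_zero, if_false, Nat.add_sub_cancel, lt_irrefl, add_zero,
      reduceIte] at htop
    have hred : fsum ι δ t (N+1) = fsum ι δ t N := by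
      unfold fsum
      rw [Finset.sum_range_succ, htop, map_zero, zero_mul, add_zero]
    exact ih t x (by rw [← hred]; exact h0)

/-- Linear independence over constants (on `range k`). -/
def IndepOn (d : F → F) (y : ℕ → F) (k : ℕ) : Prop :=
  ∀ lam : ℕ → F, (∀ i, d (lam i) = 0) → ∑ i ∈ range k, lam i * y i = 0 → ∀ i < k, lam i = 0

lemma d_sum (hd : IsDerivation d) {s : Finset ℕ} {f : ℕ → F} :
    d (∑ i ∈ s, f i) = ∑ i ∈ s, d (f i) := by
  classical
  induction s using Finset.induction_on with
  | empty => simpa using hd.map_zero'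
  | insert _ _ hk ih =>
    rw [Finset.sum_insert hk, Finset.sum_insert hk, hd.map_add, ih]

lemma indep_first_ne_zero (hd : IsDerivation d) {y : ℕ → F} {k : ℕ}
    (hy : IndepOn d y k) (hk : 0 < k) : y 0 ≠ 0 := by
  intro h0
  have := hy (fun i => if i = 0 then 1 else 0)
    (fun i => by rcases i with _|i <;> simp [hd.map_one', hd.map_zero'])
    (by
      rw [Finset.sum_eq_single 0]
      · simp [h0]
      · intro i _ hi; simp [hi]
      · intro h; exact absurd (mem_range.mpr hk) h) 0 hk
  simpa using this

lemma K1 (hd : IsDerivation d) (hA : IsDiffOpRing d A ι δ)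
    (hdom : ∀ P Q : A, P ≠ 0 → Q ≠ 0 → P * Q ≠ 0) (hι : Function.Injective ι) :
    ∀ (m : ℕ) (P : A) (y : ℕ → F) (k : ℕ), P ≠ 0 → DegLT ι δ P (m+1) → IndepOn d y k →
      (∀ i < k, act hA P (y i) = 0) → k ≤ m := by
  intro m
  induction m with
  | zero =>
    intro P y k hP hdeg hy hact
    by_contra hk
    push_neg at hk
    obtain ⟨p, hp⟩ := hdeg
    have hP1 : P = ι (p 0) := by rw [hp]; simp [fsum]
    have hp0 : p 0 ≠ 0 := fun h => hP (by rw [hP1, h, map_zero])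
    have hy0 : y 0 ≠ 0 := indep_first_ne_zero hd hy hk
    have := hact 0 hk
    rw [hP1, act_iota] at this
    exact hy0 ((mul_eq_zero.mp this).resolve_left hp0)
  | succ m ih =>
    intro P y k hP hdeg hy hact
    rcases Nat.eq_zero_or_pos k with rfl | hk
    · exact Nat.zero_le _
    have hy0 : y 0 ≠ 0 := indep_first_ne_zero hd hy hk
    have hιy0 : (ι (y 0) : A) ≠ 0 := fun h => hy0 (hι (by rw [h, map_zero]))
    set P' := P * ι (y 0) with hP'
    have hP'0 : P' ≠ 0 := hdom _ _ hP hιy0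
    obtain ⟨q, hq⟩ := hdeg.mul_iota hA (y 0)
    rw [← hP'] at hq
    -- constant term of P' is zero
    have hact1 : act hA P' 1 = 0 := by
      rw [hP', act_mul, act_iota, mul_one]
      exact hact 0 hk
    have hcc : q 0 = 0 := by
      have : act hA P' 1 = cc hA P' := by
        unfold act; rw [map_one, mul_one]
      rw [this, hq, cc_fsum] at hact1
      exact hact1
    set S := fsum ι δ (fun i => q (i+1)) (m+1) with hS
    have hSd : P' = S * δ := by
      rw [hq, fsum_split, hcc, map_zero, add_zero]
    have hS0 : S ≠ 0 := fun h => hP'0 (by rw [hSd, h, zero_mul])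
    -- the new system
    set u : ℕ → F := fun i => y i / y 0 with hu
    have hyu : ∀ i, y i = y 0 * u i := fun i => by
      rw [hu]; field_simp
    have hindu : IndepOn d u k := by
      intro lam hlam hsum i hi
      refine hy lam hlam ?_ i hi
      calc ∑ i ∈ range k, lam i * y i = y 0 * ∑ i ∈ range k, lam i * u i := by
            rw [Finset.mul_sum]
            exact Finset.sum_congr rfl fun i _ => by rw [hyu i]; ring
        _ = 0 := by rw [hsum, mul_zero]
    set w : ℕ → F := fun i => d (u (i+1)) with hw
    have hindw : IndepOn d w (k-1) := by
      intro lam hlam hsum i hi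
      set sv := ∑ jj ∈ range (k-1), lam jj * u (jj+1) with hsv
      have hds : d sv = 0 := by
        rw [hsv, d_sum hd]
        rw [← hsum]
        exact Finset.sum_congr rfl fun i _ => by
          rw [hd.leibniz, hlam i, zero_mul, zero_add]
      set mu : ℕ → F := fun i => if i = 0 then -sv else lam (i-1) with hmu
      have hmuc : ∀ i, d (mu i) = 0 := fun i => by
        rcases i with _|i
        · simpa [hmu] using (hd.map_neg' sv).trans (by rw [hds, neg_zero])
        · simpa [hmu] using hlam i
      have hmusum : ∑ i ∈ range k, mu i * u i = 0 := by
        obtain ⟨k', rfl⟩ := Nat.exists_eq_succ_of_ne_zero hk.ne'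
        rw [Finset.sum_range_succ' (fun i => mu i * u i) k']
        have hu0 : u 0 = 1 := by rw [hu]; exact div_self hy0
        have hmu0 : mu 0 = -sv := rfl
        have e1 : ∑ i ∈ range k', mu (i+1) * u (i+1) = sv := by
          rw [hsv, Nat.succ_sub_one]
          exact Finset.sum_congr rfl fun i _ => by simp [hmu]
        rw [e1, hmu0, hu0, mul_one, add_neg_cancel]
      have := hindu mu hmuc hmusum (i+1) (by omega)
      simpa [hmu] using this
    have hactw : ∀ i < k - 1, act hA S (w i) = 0 := by
      intro i hi
      have h1 : act hA P' (u (i+1)) = 0 := by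
        rw [hP', act_mul, act_iota, ← hyu (i+1)]
        exact hact (i+1) (by omega)
      rw [hSd, act_mul, act_delta] at h1
      exact h1
    have := ih S w (k-1) hS0 ⟨_, hS⟩ hindw hactw
    omega


lemma ANN (hd : IsDerivation d) (hA : IsDiffOpRing d A ι δ) :
    ∀ (n : ℕ) (y : ℕ → F), ∃ (P : A) (p : ℕ → F), p n ≠ 0 ∧ P = fsum ι δ p (n+1) ∧
      ∀ i < n, act hA P (y i) = 0 := by
  classical
  intro n
  induction n with
  | zero =>
    intro y
    refine ⟨ι 1, fun _ => 1, one_ne_zero, ?_, fun i hi => absurd hi (Nat.not_lt_zero i)⟩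
    unfold fsum
    rw [Finset.sum_range_one, pow_zero, mul_one]
  | succ n ih =>
    intro y
    set e : F := if y 0 = 0 then 0 else -(d (y 0) / y 0) with he
    set L : A := δ + ι e with hL
    have hactL : ∀ z, act hA L z = d z + e * z := fun z => act_delta_add_iota hA e z
    have hLy0 : act hA L (y 0) = 0 := by
      rw [hactL]
      by_cases h0 : y 0 = 0
      · rw [h0, hd.map_zero', mul_zero, add_zero]
      · rw [he, if_neg h0]
        field_simp
        ring
    obtain ⟨M, m, hm, hM, hMact⟩ := ih (fun i => act hA L (y (i+1)))
    obtain ⟨q, hq⟩ := (DegLT.mul_iota hA ⟨m, hM⟩ e : DegLT ι δ (M * ι e) (n+1))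
    refine ⟨M * L, fun i => (if i = 0 then 0 else m (i-1)) +
      (if i < n+1 then q i else 0), ?_, ?_, ?_⟩
    · simp [hm]
    · rw [hL, mul_add, hq, hM, fsum_mul_delta,
        fsum_pad (p := q) (M := n+1) (N := n+2) (by omega), fsum_add]
    · intro i hi
      rcases i with _|i
      · rw [act_mul, hLy0, act_zero]
      · rw [act_mul]
        exact hMact i (by omega)

end

section
variable {F : Type*} [Field F] {d : F → F} {A : Type*} [Ring A] {ι : F →+* A} {δ : A}
  {K : Type*} [DivisionRing K] {j : A →+* K}

lemma jdelta_ne_zero (hA : IsDiffOpRing d A ι δ) (hj : Function.Injective j) :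
    j δ ≠ 0 := fun h => delta_ne_zero hA (hj (by rw [h, map_zero]))

/-- Constants commute with `(jδ)⁻¹`. -/
lemma const_comm (hA : IsDiffOpRing d A ι δ) (hj : Function.Injective j)
    {lam : F} (hlam : d lam = 0) :
    j (ι lam) * (j δ)⁻¹ = (j δ)⁻¹ * j (ι lam) := by
  have hδ : j δ ≠ 0 := jdelta_ne_zero hA hj
  have hc : j δ * j (ι lam) = j (ι lam) * j δ := by
    rw [← map_mul, ← map_mul, hA.comm, hlam, map_zero, add_zero]
  calc j (ι lam) * (j δ)⁻¹ = (j δ)⁻¹ * (j δ * j (ι lam)) * (j δ)⁻¹ := by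
        rw [← mul_assoc, inv_mul_cancel₀ hδ, one_mul]
    _ = (j δ)⁻¹ * (j (ι lam) * j δ) * (j δ)⁻¹ := by rw [hc]
    _ = (j δ)⁻¹ * j (ι lam) := by
        rw [mul_assoc, mul_assoc, mul_inv_cancel₀ hδ, mul_one]

open scoped Classical in
lemma K2 (hd : IsDerivation d) (hA : IsDiffOpRing d A ι δ) (hj : Function.Injective j)
    (hι : Function.Injective ι) :
    ∀ (N n : ℕ) (b c : ℕ → F) (T : A), IndepOn d b n →
      ((range n).filter fun i => c i ≠ 0).card = N →
      (∑ i ∈ range n, j (ι (c i)) * (j δ)⁻¹ * j (ι (b i))) = j T →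
      ∀ i < n, c i = 0 := by
  classical
  have hδ : j δ ≠ 0 := jdelta_ne_zero hA hj
  intro N
  induction N using Nat.strong_induction_on with
  | _ N IH =>
  intro n b c T hb hcard hsum
  rcases Nat.eq_zero_or_pos N with rfl | hN
  · intro i hi
    by_contra hci
    have : i ∈ (range n).filter fun i => c i ≠ 0 := by
      rw [mem_filter]; exact ⟨mem_range.mpr hi, hci⟩
    rw [Finset.card_eq_zero.mp hcard] at this
    exact absurd this (Finset.notMem_empty i)
  exfalso
  obtain ⟨k, hk⟩ := Finset.card_pos.mp (hcard ▸ hN)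
  rw [mem_filter, mem_range] at hk
  obtain ⟨hkn, hck⟩ := hk
  set c' : ℕ → F := fun i => d (c i) + (-(d (c k) / c k)) * c i with hc'
  by_cases hB : ∀ i < n, c' i = 0
  · -- all cᵢ/c_k constant; contradiction with independence
    have hlamc : ∀ i < n, d (c i / c k) = 0 := by
      intro i hi
      have h2 := hd.leibniz (c i / c k) (c k)
      rw [div_mul_cancel₀ _ hck] at h2
      have h3 : d (c i) + -(d (c k) / c k) * c i = 0 := hB i hi
      have hthis : (c i / c k) * d (c k) = (d (c k) / c k) * c i := by
        field_simp
      have h4 : d (c i / c k) * c k = 0 := by linear_combination h3 - h2 - hthis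
      exact (mul_eq_zero.mp h4).resolve_right hck
    have hterm : ∀ i ∈ range n, j (ι (c i)) * (j δ)⁻¹ * j (ι (b i)) =
        j (ι (c k)) * ((j δ)⁻¹ * j (ι ((c i / c k) * b i))) := by
      intro i hi
      have hcomm := const_comm hA hj (hlamc i (mem_range.mp hi))
      have h2 : j (ι (c i)) = j (ι (c k)) * j (ι (c i / c k)) := by
        rw [← map_mul, ← map_mul]
        congr 1
        congr 1
        field_simp
      calc j (ι (c i)) * (j δ)⁻¹ * j (ι (b i))
          = j (ι (c k)) * j (ι (c i / c k)) * (j δ)⁻¹ * j (ι (b i)) := by rw [h2]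
        _ = j (ι (c k)) * (j (ι (c i / c k)) * (j δ)⁻¹) * j (ι (b i)) := by
            rw [mul_assoc (j (ι (c k)))]
        _ = j (ι (c k)) * ((j δ)⁻¹ * j (ι (c i / c k))) * j (ι (b i)) := by rw [hcomm]
        _ = j (ι (c k)) * ((j δ)⁻¹ * (j (ι (c i / c k)) * j (ι (b i)))) := by
            rw [mul_assoc (j (ι (c k))), mul_assoc ((j δ)⁻¹)]
        _ = j (ι (c k)) * ((j δ)⁻¹ * j (ι ((c i / c k) * b i))) := by rw [← map_mul, ← map_mul]
    rw [Finset.sum_congr rfl hterm, ← Finset.mul_sum, ← Finset.mul_sum, ← map_sum, ← map_sum]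
      at hsum
    set bstar : F := ∑ i ∈ range n, (c i / c k) * b i with hbstar
    have hbs0 : bstar ≠ 0 := by
      intro h0
      have hsum0 : ∑ i ∈ range n, (if i < n then c i / c k else 0) * b i = 0 := by
        rw [← h0, hbstar]
        exact Finset.sum_congr rfl fun i hi => by simp [mem_range.mp hi]
      have := hb (fun i => if i < n then c i / c k else 0)
        (fun i => by
          by_cases hi : i < n
          · simpa [hi] using hlamc i hi
          · simpa [hi] using hd.map_zero')
        hsum0 k hkn
      simp only [hkn, if_true, div_self hck] at this
      exact one_ne_zero this
    -- from hsum : j (ι (c k)) * ((j δ)⁻¹ * j (ι bstar)) = j T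
    have hjck : j (ι (c k)) ≠ 0 := fun h =>
      hck (hι (hj (by rw [h, map_zero, map_zero])))
    have h5 : (j δ)⁻¹ * j (ι bstar) = j (ι (c k)⁻¹ * T) := by
      rw [map_mul]
      have hinv : (j (ι (c k)))⁻¹ = j (ι (c k)⁻¹) := by
        refine inv_eq_of_mul_eq_one_right ?_
        rw [← map_mul, ← map_mul, mul_inv_cancel₀ hck, map_one, map_one]
      rw [← hinv, ← hsum, ← mul_assoc, inv_mul_cancel₀ hjck, one_mul]
    have h6 : j (ι bstar) = j (δ * (ι (c k)⁻¹ * T)) := by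
      rw [map_mul, ← h5, ← mul_assoc, mul_inv_cancel₀ hδ, one_mul]
    have h7 : ι bstar = δ * (ι (c k)⁻¹ * T) := hj h6
    obtain ⟨t, Nt, -, hT⟩ := exists_fsum hA (ι (c k)⁻¹ * T)
    exact hbs0 (delta_mul_eq_iota_left hA Nt t bstar (by rw [← hT, ← h7]))
  · -- some c'ᵢ ≠ 0 : reduce the number of nonzero coefficients
    push_neg at hB
    obtain ⟨i0, hi0n, hi0⟩ := hB
    set L : A := δ + ι (-(d (c k) / c k)) with hL
    have hLc : ∀ i, L * ι (c i) = ι (c i) * δ + ι (c' i) := by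
      intro i
      rw [hL, add_mul, hA.comm, ← map_mul, hc', map_add, add_assoc]
    have hstep : ∑ i ∈ range n, j (ι (c' i)) * (j δ)⁻¹ * j (ι (b i)) =
        j (L * T - ∑ i ∈ range n, ι (c i) * ι (b i)) := by
      have h1 : ∀ i ∈ range n, j L * (j (ι (c i)) * (j δ)⁻¹ * j (ι (b i))) =
          j (ι (c i) * ι (b i)) + j (ι (c' i)) * (j δ)⁻¹ * j (ι (b i)) := by
        intro i _
        rw [← mul_assoc, ← mul_assoc, ← map_mul, hLc i, map_add, add_mul, add_mul,
          map_mul (f := j) (x := ι (c i)) (y := δ), mul_assoc (j (ι (c i))),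
          mul_inv_cancel₀ hδ, mul_one, ← map_mul]
      have h2 : j (L * T) = j (∑ i ∈ range n, ι (c i) * ι (b i)) +
          ∑ i ∈ range n, j (ι (c' i)) * (j δ)⁻¹ * j (ι (b i)) := by
        rw [map_mul, ← hsum, Finset.mul_sum, Finset.sum_congr rfl h1, Finset.sum_add_distrib,
          map_sum]
      rw [map_sub, h2]
      exact (add_sub_cancel_left _ _).symm
    have hsub : ((range n).filter fun i => c' i ≠ 0) ⊆
        ((range n).filter fun i => c i ≠ 0).erase k := by
      intro i hi
      rw [mem_filter] at hi
      rw [Finset.mem_erase, mem_filter]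
      refine ⟨?_, hi.1, ?_⟩
      · intro hik
        apply hi.2
        show d (c i) + -(d (c k) / c k) * c i = 0
        rw [hik]
        field_simp
        ring
      · intro hci
        apply hi.2
        show d (c i) + -(d (c k) / c k) * c i = 0
        rw [hci, hd.map_zero', mul_zero, add_zero]
    have hlt : (((range n).filter fun i => c' i ≠ 0)).card < N := by
      calc _ ≤ (((range n).filter fun i => c i ≠ 0).erase k).card := Finset.card_le_card hsub
        _ < N := by
          rw [← hcard]
          exact Finset.card_erase_lt_of_mem (by rw [mem_filter, mem_range]; exact ⟨hkn, hck⟩)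
    exact hi0 (IH _ hlt n b c' _ hb rfl hstep i0 hi0n)


lemma const_neg (hd : IsDerivation d) {x : F} (hx : d x = 0) : d (-x) = 0 := by
  rw [hd.map_neg', hx, neg_zero]

lemma const_div (hd : IsDerivation d) {x y : F} (hx : d x = 0) (hy : d y = 0) :
    d (x / y) = 0 := by
  by_cases h0 : y = 0
  · rw [h0, div_zero, hd.map_zero']
  · have h := hd.leibniz (x / y) y
    rw [div_mul_cancel₀ _ h0, hx, hy, mul_zero, add_zero] at h
    exact (mul_eq_zero.mp h.symm).resolve_right h0

lemma key_id (hA : IsDiffOpRing d A ι δ) (hj : Function.Injective j)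
    {n : ℕ} {a : F} {aa bb : ℕ → F} {f : K}
    (hf : f = j (ι a) + ∑ i ∈ range n, j (ι (aa i)) * (j δ)⁻¹ * j (ι (bb i)))
    (P : A) (R : ℕ → A)
    (hR : ∀ i, P * ι (aa i) = R i * δ + ι (act hA P (aa i))) :
    j P * f = j (P * ι a + ∑ i ∈ range n, R i * ι (bb i)) +
      ∑ i ∈ range n, j (ι (act hA P (aa i))) * (j δ)⁻¹ * j (ι (bb i)) := by
  have hδ : j δ ≠ 0 := jdelta_ne_zero hA hj
  have h1 : ∀ i ∈ range n, j P * (j (ι (aa i)) * (j δ)⁻¹ * j (ι (bb i))) =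
      j (R i * ι (bb i)) + j (ι (act hA P (aa i))) * (j δ)⁻¹ * j (ι (bb i)) := by
    intro i _
    rw [← mul_assoc, ← mul_assoc, ← map_mul, hR i, map_add, add_mul, add_mul,
      map_mul (f := j) (x := R i) (y := δ), mul_assoc (j (R i)),
      mul_inv_cancel₀ hδ, mul_one, ← map_mul]
  rw [hf, mul_add, Finset.mul_sum, Finset.sum_congr rfl h1, Finset.sum_add_distrib,
    map_add, map_sum, ← map_mul]
  rw [add_assoc]

/-- Upper bound: a presentation of `f` with denominator of degree exactly `n`. -/
lemma UB (hd : IsDerivation d) (hA : IsDiffOpRing d A ι δ) (hj : Function.Injective j)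
    {n : ℕ} {a : F} {aa bb : ℕ → F} {f : K}
    (hf : f = j (ι a) + ∑ i ∈ range n, j (ι (aa i)) * (j δ)⁻¹ * j (ι (bb i))) :
    ∃ P Q : A, P ≠ 0 ∧ f = (j P)⁻¹ * j Q ∧ HasDeg ι δ P n := by
  obtain ⟨P, p, hpn, hP, hact⟩ := ANN hd hA n aa
  choose R hR using fun i => cc_spec hA (P * ι (aa i))
  have hkey := key_id hA hj hf P R hR
  have hz : ∀ i ∈ range n, j (ι (act hA P (aa i))) * (j δ)⁻¹ * j (ι (bb i)) = 0 := by
    intro i hi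
    rw [hact i (mem_range.mp hi), map_zero, map_zero, zero_mul, zero_mul]
  rw [Finset.sum_eq_zero hz, add_zero] at hkey
  have hP0 : P ≠ 0 := by
    rw [hP]; exact fsum_ne_zero hA (Nat.lt_succ_self n) hpn
  have hjP : j P ≠ 0 := fun h => hP0 (hj (by rw [h, map_zero]))
  refine ⟨P, P * ι a + ∑ i ∈ range n, R i * ι (bb i), hP0, ?_, p, hpn, hP⟩
  rw [← hkey, ← mul_assoc, inv_mul_cancel₀ hjP, one_mul]

/-- Lower bound: with independent coefficient families, every presentation has degree `≥ n`. -/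
lemma LB (hd : IsDerivation d) (hA : IsDiffOpRing d A ι δ) (hj : Function.Injective j)
    (hι : Function.Injective ι) (hdom : ∀ P Q : A, P ≠ 0 → Q ≠ 0 → P * Q ≠ 0)
    {n : ℕ} {a : F} {aa bb : ℕ → F} {f : K}
    (hf : f = j (ι a) + ∑ i ∈ range n, j (ι (aa i)) * (j δ)⁻¹ * j (ι (bb i)))
    (haa : IndepOn d aa n) (hbb : IndepOn d bb n)
    {P Q : A} {m : ℕ} (hP0 : P ≠ 0) (hPQ : f = (j P)⁻¹ * j Q) (hdeg : HasDeg ι δ P m) :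
    n ≤ m := by
  classical
  have hjP : j P ≠ 0 := fun h => hP0 (hj (by rw [h, map_zero]))
  have hQ : j P * f = j Q := by
    rw [hPQ, ← mul_assoc, mul_inv_cancel₀ hjP, one_mul]
  choose R hR using fun i => cc_spec hA (P * ι (aa i))
  have hkey := key_id hA hj hf P R hR
  rw [hQ] at hkey
  have hsum : ∑ i ∈ range n, j (ι (act hA P (aa i))) * (j δ)⁻¹ * j (ι (bb i)) =
      j (Q - (P * ι a + ∑ i ∈ range n, R i * ι (bb i))) := by
    rw [map_sub, hkey]
    exact (add_sub_cancel_left _ _).symm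
  have hzero : ∀ i < n, act hA P (aa i) = 0 :=
    K2 hd hA hj hι _ n bb _ _ hbb rfl hsum
  obtain ⟨p, hpm, hP⟩ := hdeg
  exact K1 hd hA hdom hι m P aa n hP0 ⟨p, hP⟩ haa hzero

lemma EXACT (hd : IsDerivation d) (hA : IsDiffOpRing d A ι δ) (hj : Function.Injective j)
    (hι : Function.Injective ι) (hdom : ∀ P Q : A, P ≠ 0 → Q ≠ 0 → P * Q ≠ 0)
    {n : ℕ} {a : F} {aa bb : ℕ → F} {f : K}
    (hf : f = j (ι a) + ∑ i ∈ range n, j (ι (aa i)) * (j δ)⁻¹ * j (ι (bb i)))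
    (haa : IndepOn d aa n) (hbb : IndepOn d bb n)
    {ℓ : ℕ} (hℓ : HasLength ι δ j f ℓ) : ℓ = n := by
  obtain ⟨P, Q, hP0, hPQ, hdeg⟩ := UB hd hA hj hf
  have h1 : ℓ ≤ n := hℓ.2 P Q n hP0 hPQ hdeg
  obtain ⟨P', Q', hP'0, hP'Q', hdeg'⟩ := hℓ.1
  have h2 : n ≤ ℓ := LB hd hA hj hι hdom hf haa hbb hP'0 hP'Q' hdeg'
  omega

lemma sum_swap_last {M : Type*} [AddCommMonoid M] (g : ℕ → M) {n k : ℕ} (hk : k < n + 1) :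
    ∑ i ∈ range (n+1), g i = ∑ i ∈ range (n+1), g (Equiv.swap k n i) := by
  have hmem : ∀ i, i < n + 1 → Equiv.swap k n i < n + 1 := by
    intro i hi
    rcases eq_or_ne i k with rfl | h1
    · rw [Equiv.swap_apply_left]; omega
    rcases eq_or_ne i n with rfl | h2
    · rw [Equiv.swap_apply_right]; omega
    · rw [Equiv.swap_apply_of_ne_of_ne h1 h2]; exact hi
  refine Finset.sum_equiv (Equiv.swap k n) (fun i => ?_) (fun i _ => ?_)
  · rw [mem_range, mem_range]
    constructor
    · exact hmem i
    · intro h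
      have := hmem _ h
      rwa [Equiv.swap_apply_self] at this
  · rw [Equiv.swap_apply_self]

lemma elim_last_a (hd : IsDerivation d) (hA : IsDiffOpRing d A ι δ)
    (hj : Function.Injective j)
    {n : ℕ} {a : F} {aa bb : ℕ → F} {f : K}
    (hf : f = j (ι a) + ∑ i ∈ range (n+1), j (ι (aa i)) * (j δ)⁻¹ * j (ι (bb i)))
    {lam : ℕ → F} (hlc : ∀ i, d (lam i) = 0)
    (hls : ∑ i ∈ range (n+1), lam i * aa i = 0) (hln : lam n ≠ 0) :
    f = j (ι a) + ∑ i ∈ range n,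
      j (ι (aa i)) * (j δ)⁻¹ * j (ι (bb i + (-(lam i / lam n)) * bb n)) := by
  have hδ : j δ ≠ 0 := jdelta_ne_zero hA hj
  set mu : ℕ → F := fun i => -(lam i / lam n) with hmu
  have hmuc : ∀ i, d (mu i) = 0 := fun i => const_neg hd (const_div hd (hlc i) (hlc n))
  rw [Finset.sum_range_succ] at hls
  have haan : aa n = ∑ i ∈ range n, mu i * aa i := by
    have h1 : lam n * aa n = -∑ i ∈ range n, lam i * aa i :=
      eq_neg_of_add_eq_zero_right hls
    have h2 : aa n = (lam n)⁻¹ * (lam n * aa n) := by field_simp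
    rw [h2, h1, ← Finset.sum_neg_distrib, Finset.mul_sum]
    exact Finset.sum_congr rfl fun i _ => by rw [hmu]; field_simp
  have htn : j (ι (aa n)) * (j δ)⁻¹ * j (ι (bb n)) =
      ∑ i ∈ range n, j (ι (aa i)) * (j δ)⁻¹ * j (ι (mu i * bb n)) := by
    rw [haan, map_sum, map_sum, Finset.sum_mul, Finset.sum_mul]
    refine Finset.sum_congr rfl fun i _ => ?_
    rw [show mu i * aa i = aa i * mu i from mul_comm _ _, map_mul, map_mul,
      mul_assoc (j (ι (aa i))), const_comm hA hj (hmuc i), ← mul_assoc,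
      mul_assoc (j (ι (aa i)) * (j δ)⁻¹), ← map_mul, ← map_mul]
  rw [hf, Finset.sum_range_succ, htn, ← Finset.sum_add_distrib]
  congr 1
  refine Finset.sum_congr rfl fun i _ => ?_
  rw [map_add, map_add, mul_add]

lemma elim_last_b (hd : IsDerivation d) (hA : IsDiffOpRing d A ι δ)
    (hj : Function.Injective j)
    {n : ℕ} {a : F} {aa bb : ℕ → F} {f : K}
    (hf : f = j (ι a) + ∑ i ∈ range (n+1), j (ι (aa i)) * (j δ)⁻¹ * j (ι (bb i)))
    {lam : ℕ → F} (hlc : ∀ i, d (lam i) = 0)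
    (hls : ∑ i ∈ range (n+1), lam i * bb i = 0) (hln : lam n ≠ 0) :
    f = j (ι a) + ∑ i ∈ range n,
      j (ι (aa i + aa n * (-(lam i / lam n)))) * (j δ)⁻¹ * j (ι (bb i)) := by
  have hδ : j δ ≠ 0 := jdelta_ne_zero hA hj
  set mu : ℕ → F := fun i => -(lam i / lam n) with hmu
  have hmuc : ∀ i, d (mu i) = 0 := fun i => const_neg hd (const_div hd (hlc i) (hlc n))
  rw [Finset.sum_range_succ] at hls
  have hbbn : bb n = ∑ i ∈ range n, mu i * bb i := by
    have h1 : lam n * bb n = -∑ i ∈ range n, lam i * bb i :=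
      eq_neg_of_add_eq_zero_right hls
    have h2 : bb n = (lam n)⁻¹ * (lam n * bb n) := by field_simp
    rw [h2, h1, ← Finset.sum_neg_distrib, Finset.mul_sum]
    exact Finset.sum_congr rfl fun i _ => by rw [hmu]; field_simp
  have htn : j (ι (aa n)) * (j δ)⁻¹ * j (ι (bb n)) =
      ∑ i ∈ range n, j (ι (aa n * mu i)) * (j δ)⁻¹ * j (ι (bb i)) := by
    rw [hbbn, map_sum, map_sum, Finset.mul_sum]
    refine Finset.sum_congr rfl fun i _ => ?_
    rw [map_mul, map_mul, ← mul_assoc (j (ι (aa n)) * (j δ)⁻¹), mul_assoc (j (ι (aa n))),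
      ← const_comm hA hj (hmuc i), ← mul_assoc, ← map_mul, ← map_mul]
  rw [hf, Finset.sum_range_succ, htn, ← Finset.sum_add_distrib]
  congr 1
  refine Finset.sum_congr rfl fun i _ => ?_
  rw [map_add, map_add, add_mul, add_mul]

lemma MAIN (hd : IsDerivation d) (hA : IsDiffOpRing d A ι δ) (hj : Function.Injective j)
    (hι : Function.Injective ι) (hdom : ∀ P Q : A, P ≠ 0 → Q ≠ 0 → P * Q ≠ 0) :
    ∀ (n : ℕ) (a : F) (aa bb : ℕ → F) (f : K),
      f = j (ι a) + ∑ i ∈ range n, j (ι (aa i)) * (j δ)⁻¹ * j (ι (bb i)) →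
      ∀ ℓ : ℕ, HasLength ι δ j f ℓ →
      ℓ ≤ n ∧ ∃ (a' : F) (aa' bb' : ℕ → F),
        f = j (ι a') + ∑ i ∈ range ℓ, j (ι (aa' i)) * (j δ)⁻¹ * j (ι (bb' i)) := by
  intro n
  induction n with
  | zero =>
    intro a aa bb f hf ℓ hℓ
    have hind : ∀ y : ℕ → F, IndepOn d y 0 := fun y lam _ _ i hi => absurd hi (Nat.not_lt_zero i)
    have h := EXACT hd hA hj hι hdom hf (hind aa) (hind bb) hℓ
    exact ⟨h.le, a, aa, bb, by rw [h]; exact hf⟩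
  | succ n ih =>
    intro a aa bb f hf ℓ hℓ
    by_cases hcase : IndepOn d aa (n+1) ∧ IndepOn d bb (n+1)
    · have h := EXACT hd hA hj hι hdom hf hcase.1 hcase.2 hℓ
      exact ⟨h.le, a, aa, bb, by rw [h]; exact hf⟩
    · rw [not_and_or] at hcase
      have hred : ∃ (a' : F) (aa' bb' : ℕ → F),
          f = j (ι a') + ∑ i ∈ range n, j (ι (aa' i)) * (j δ)⁻¹ * j (ι (bb' i)) := by
        rcases hcase with hcase | hcase
        · unfold IndepOn at hcase
          push_neg at hcase
          obtain ⟨lam, hlc, hls, k, hkn, hlk⟩ := hcase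
          set s := Equiv.swap k n with hs
          have hf2 : f = j (ι a) +
              ∑ i ∈ range (n+1), j (ι (aa (s i))) * (j δ)⁻¹ * j (ι (bb (s i))) := by
            rw [hf]
            congr 1
            exact sum_swap_last (fun i => j (ι (aa i)) * (j δ)⁻¹ * j (ι (bb i))) hkn
          have hls2 : ∑ i ∈ range (n+1), lam (s i) * aa (s i) = 0 := by
            rw [← sum_swap_last (fun i => lam i * aa i) hkn]; exact hls
          have hln2 : lam (s n) ≠ 0 := by
            rw [hs, Equiv.swap_apply_right]; exact hlk
          exact ⟨a, _, _, elim_last_a hd hA hj hf2 (fun i => hlc (s i)) hls2 hln2⟩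
        · unfold IndepOn at hcase
          push_neg at hcase
          obtain ⟨lam, hlc, hls, k, hkn, hlk⟩ := hcase
          set s := Equiv.swap k n with hs
          have hf2 : f = j (ι a) +
              ∑ i ∈ range (n+1), j (ι (aa (s i))) * (j δ)⁻¹ * j (ι (bb (s i))) := by
            rw [hf]
            congr 1
            exact sum_swap_last (fun i => j (ι (aa i)) * (j δ)⁻¹ * j (ι (bb i))) hkn
          have hls2 : ∑ i ∈ range (n+1), lam (s i) * bb (s i) = 0 := by
            rw [← sum_swap_last (fun i => lam i * bb i) hkn]; exact hls
          have hln2 : lam (s n) ≠ 0 := by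
            rw [hs, Equiv.swap_apply_right]; exact hlk
          exact ⟨a, _, _, elim_last_b hd hA hj hf2 (fun i => hlc (s i)) hls2 hln2⟩
      obtain ⟨a', aa', bb', hf'⟩ := hred
      obtain ⟨h1, h2⟩ := ih a' aa' bb' f hf' ℓ hℓ
      exact ⟨h1.trans (Nat.le_succ n), h2⟩

end

/-- If `I = a + Σ_{i=1}^n aᵢ ∂⁻¹ bᵢ ∈ F⟨∂⁻¹⟩`, then `L(I) ≤ n`; moreover `I`
admits a presentation of the same form with exactly `L(I)` summands. -/
theorem length_le_numTerms_and_exists_short_presentation {F : Type*} [Field F] [CharZero F]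
    (d : F → F) (hd : IsDerivation d)
    (halg : IsAlgClosed (constants F d hd))
    (hne : constants F d hd ≠ ⊤)
    {A : Type*} [Ring A] (ι : F →+* A) (δ : A) (hA : IsDiffOpRing d A ι δ)
    {K : Type*} [DivisionRing K] (j : A →+* K) (hK : IsQuotientDivisionRing A K j)
    (n : ℕ) (a : F) (aa bb : ℕ → F) (f : K)
    (hf : f = j (ι a) + ∑ i ∈ Finset.range n, j (ι (aa i)) * (j δ)⁻¹ * j (ι (bb i)))
    (ℓ : ℕ) (hℓ : HasLength ι δ j f ℓ) :
    ℓ ≤ n ∧ ∃ (a' : F) (aa' bb' : ℕ → F),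
      f = j (ι a') + ∑ i ∈ Finset.range ℓ, j (ι (aa' i)) * (j δ)⁻¹ * j (ι (bb' i)) := by
  haveI : Nontrivial A :=
    ⟨1, 0, fun h => one_ne_zero (α := K) (by rw [← map_one j, h, map_zero])⟩
  have hj : Function.Injective j := hK.inj
  have hι : Function.Injective ι := ι.injective
  have hdom : ∀ P Q : A, P ≠ 0 → Q ≠ 0 → P * Q ≠ 0 := by
    intro P Q hP hQ h
    have h2 : j P * j Q = 0 := by rw [← map_mul, h, map_zero]
    rcases mul_eq_zero.mp h2 with h' | h'
    · exact hP (hj (by rw [h', map_zero]))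
    · exact hQ (hj (by rw [h', map_zero]))
  exact MAIN hd hA hj hι hdom n a aa bb f hf ℓ hℓ
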